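/- Consider the two-bidder discrete first-price auction with bidding space B = {0, 1/10, 2/10, …, 1} where the value pair (v₁, v₂) is uniform on {(0,1), (1/2,1/2), (1,0)}. Then there is no monotone mixed Bayes-Nash equilibrium (β₁, β₂) satisfying no-overbidding. Specifically: at any such equilibrium, bidder 1 with value 1 must bid 1/10 (pure), so monotonicity forces supp(β₁(1/2)) ⊆ {0, 1/10}; against any such strategy bidding 0 at value 1/2 is strictly dominated by bidding 1/10; but the symmetric profile of both bidding 1/10 at value 1/2 admits a profitable deviation to 2/10. -/

import Mathlib

/-! Non-existence of monotone mixed Bayes-Nash equilibria in the two-bidder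
discrete first-price auction with bids `{0, 1/10, …, 1}` and value pairs
uniform on `{(0,1), (1/2,1/2), (1,0)}`.

Values are indexed by `Fin 3` via `val = ![0, 1/2, 1]`; the (deterministic)
conditional value of the opponent is given by `other = ![2, 1, 0]`
(value `0` pairs with `1`, `1/2` with `1/2`, `1` with `0`). Bids are indexed
by `Fin 11` via `bid k = k/10`. -/

/-- The `k`-th allowed bid, `k/10`. -/
noncomputable def FPA.bid (k : Fin 11) : ℝ := (k : ℕ) / 10

/-- The `i`-th value, from `![0, 1/2, 1]`. -/
noncomputable def FPA.val : Fin 3 → ℝ := ![0, 1/2, 1]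

/-- Index of the opponent's value conditioned on one's own value index. -/
def FPA.other : Fin 3 → Fin 3 := ![2, 1, 0]

/-- Ex-post utility of bidding `b₁` against `b₂` with value `v`, under
uniform tie-breaking. -/
noncomputable def FPA.expost (b₁ b₂ v : ℝ) : ℝ :=
  if b₂ < b₁ then v - b₁ else if b₁ = b₂ then (v - b₁) / 2 else 0

/-- Interim utility of bidding `bid k` at value `val i` when the opponent plays
the mixed strategy `σ` (probability `σ i' k'` of bidding `bid k'` at value
`val i'`). -/
noncomputable def FPA.interim (σ : Fin 3 → Fin 11 → ℝ) (i : Fin 3) (k : Fin 11) : ℝ :=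
  ∑ j : Fin 11, σ (FPA.other i) j * FPA.expost (FPA.bid k) (FPA.bid j) (FPA.val i)

/-- `σ` is a valid mixed strategy. -/
noncomputable def FPA.valid (σ : Fin 3 → Fin 11 → ℝ) : Prop :=
  (∀ i k, 0 ≤ σ i k) ∧ ∀ i, (∑ k : Fin 11, σ i k) = 1

/-- `σ` is monotone: any bid in the support at a lower value is at most any bid
in the support at a higher value. -/
def FPA.monotoneStrat (σ : Fin 3 → Fin 11 → ℝ) : Prop :=
  ∀ i i' : Fin 3, i < i' → ∀ k k' : Fin 11,
    0 < σ i k → 0 < σ i' k' → FPA.bid k ≤ FPA.bid k'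

/-- `σ` never overbids. -/
def FPA.noOverbid (σ : Fin 3 → Fin 11 → ℝ) : Prop :=
  ∀ i k, 0 < σ i k → FPA.bid k ≤ FPA.val i

/-- `σ₁` best-responds to `σ₂` at every value. -/
def FPA.bestResponds (σ₁ σ₂ : Fin 3 → Fin 11 → ℝ) : Prop :=
  ∀ i : Fin 3, ∀ k : Fin 11,
    FPA.interim σ₂ i k ≤ ∑ k' : Fin 11, σ₁ i k' * FPA.interim σ₂ i k'


/-- Sum over `Fin 11` of a function vanishing outside `{0,1}`. -/
lemma FPA.two_point (f : Fin 11 → ℝ) (h : ∀ j, j ≠ 0 → j ≠ 1 → f j = 0) :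
    ∑ j, f j = f 0 + f 1 := by
  rw [← Finset.sum_subset (Finset.subset_univ ({0,1} : Finset (Fin 11)))
    (fun x _ hx => by simp at hx; exact h x hx.1 hx.2)]
  simp [Finset.sum_pair (by decide : (0:Fin 11) ≠ 1)]

/-- Sum over `Fin 11` of a function vanishing outside `{k₀}`. -/
lemma FPA.one_point (f : Fin 11 → ℝ) (k₀ : Fin 11) (h : ∀ j, j ≠ k₀ → f j = 0) :
    ∑ j, f j = f k₀ :=
  Finset.sum_eq_single k₀ (fun b _ hb => h b hb) (by simp)

/-- If a mixture of utilities attains the maximum, it puts no weight on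
strictly suboptimal actions. -/
lemma FPA.conc (w u : Fin 11 → ℝ) (hnn : ∀ k, 0 ≤ w k) (hsum : ∑ k, w k = 1)
    (k₀ : Fin 11) (hmax : ∀ k, u k ≤ u k₀) (hbr : u k₀ ≤ ∑ k, w k * u k) :
    ∀ k, u k < u k₀ → w k = 0 := by
  have key : ∑ k, w k * (u k₀ - u k) = 0 := by
    have h1 : ∑ k, w k * (u k₀ - u k)
        = (∑ k, w k) * u k₀ - ∑ k, w k * u k := by
      rw [Finset.sum_mul, ← Finset.sum_sub_distrib]
      exact Finset.sum_congr rfl fun k _ => by ring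
    have h2 : 0 ≤ ∑ k, w k * (u k₀ - u k) :=
      Finset.sum_nonneg fun k _ => mul_nonneg (hnn k) (sub_nonneg.2 (hmax k))
    rw [h1, hsum] at *
    linarith [h1]
  intro k hk
  have hz := (Finset.sum_eq_zero_iff_of_nonneg
    (fun k _ => mul_nonneg (hnn k) (sub_nonneg.2 (hmax k)))).1 key k (Finset.mem_univ k)
  by_contra h
  have hw : 0 < w k := lt_of_le_of_ne (hnn k) (Ne.symm h)
  nlinarith

/-- Core one-sided lemma: at any monotone no-overbidding equilibrium, the
middle-value row of a best-responding bidder is supported on `{0, 1/10}`. -/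
lemma FPA.side (σ₁ σ₂ : Fin 3 → Fin 11 → ℝ) (hv1 : FPA.valid σ₁) (hv2 : FPA.valid σ₂)
    (hm1 : FPA.monotoneStrat σ₁) (hn2 : FPA.noOverbid σ₂)
    (hbr1 : FPA.bestResponds σ₁ σ₂) :
    ∀ j : Fin 11, j ≠ 0 → j ≠ 1 → σ₁ 1 j = 0 := by
  obtain ⟨h1nn, h1s⟩ := hv1
  obtain ⟨h2nn, h2s⟩ := hv2
  -- value-0 row of σ₂ is a point mass at bid 0
  have h20 : ∀ j : Fin 11, j ≠ 0 → σ₂ 0 j = 0 := by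
    intro j hj
    by_contra h
    have hpos : 0 < σ₂ 0 j := lt_of_le_of_ne (h2nn 0 j) (Ne.symm h)
    have := hn2 0 j hpos
    have hb : (0:ℝ) < FPA.bid j := by
      have : 0 < (j : ℕ) := Nat.pos_of_ne_zero (fun hh => hj (Fin.ext hh))
      unfold FPA.bid
      positivity
    have hv0 : FPA.val 0 = 0 := by norm_num [FPA.val]
    rw [hv0] at this
    linarith
  have h200 : σ₂ 0 0 = 1 := by
    have := h2s 0
    rwa [FPA.one_point _ 0 h20] at this
  -- interim utility at value 1 is just ex-post utility against bid 0
  have heval : ∀ k : Fin 11, FPA.interim σ₂ 2 k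
      = FPA.expost (FPA.bid k) (FPA.bid 0) (FPA.val 2) := by
    intro k
    unfold FPA.interim
    have ho : FPA.other 2 = 0 := rfl
    rw [ho, FPA.one_point _ 0 (fun j hj => by rw [h20 j hj, zero_mul]), h200, one_mul]
  -- bid 1/10 is the unique best response at value 1
  have hv2 : FPA.val 2 = 1 := rfl
  have hmax : ∀ k : Fin 11, FPA.interim σ₂ 2 k ≤ FPA.interim σ₂ 2 1 := by
    intro k
    rw [heval, heval, hv2]
    fin_cases k <;> norm_num [FPA.expost, FPA.bid, FPA.val]
  have hstrict : ∀ k : Fin 11, k ≠ 1 → FPA.interim σ₂ 2 k < FPA.interim σ₂ 2 1 := by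
    intro k hk
    rw [heval, heval, hv2]
    revert hk
    fin_cases k <;> intro hk <;>
      first
        | exact absurd rfl hk
        | norm_num [FPA.expost, FPA.bid, FPA.val]
  have hzero : ∀ k : Fin 11, k ≠ 1 → σ₁ 2 k = 0 := by
    intro k hk
    exact FPA.conc (σ₁ 2) (FPA.interim σ₂ 2) (h1nn 2) (h1s 2) 1 hmax (hbr1 2 1) k
      (hstrict k hk)
  have h211 : σ₁ 2 1 = 1 := by
    have := h1s 2
    rwa [FPA.one_point _ 1 hzero] at this
  -- monotonicity: middle-value support lies below bid 1/10
  intro j hj0 hj1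
  by_contra h
  have hpos : 0 < σ₁ 1 j := lt_of_le_of_ne (h1nn 1 j) (Ne.symm h)
  have hb := hm1 1 2 (by decide) j 1 hpos (by rw [h211]; norm_num)
  unfold FPA.bid at hb
  have hle : ((j : ℕ) : ℝ) ≤ ((1 : Fin 11) : ℕ) := by
    have h10 : (0:ℝ) < 10 := by norm_num
    exact (div_le_div_iff_of_pos_right h10).1 hb
  have : (j : ℕ) ≤ 1 := by exact_mod_cast hle
  have hj0' : (j : ℕ) ≠ 0 := fun hh => hj0 (Fin.ext hh)
  have hj1' : (j : ℕ) ≠ 1 := fun hh => hj1 (Fin.ext hh)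
  omega

theorem no_monotone_MBNE :
    ¬ ∃ σ₁ σ₂ : Fin 3 → Fin 11 → ℝ,
      FPA.valid σ₁ ∧ FPA.valid σ₂ ∧
      FPA.monotoneStrat σ₁ ∧ FPA.monotoneStrat σ₂ ∧
      FPA.noOverbid σ₁ ∧ FPA.noOverbid σ₂ ∧
      FPA.bestResponds σ₁ σ₂ ∧ FPA.bestResponds σ₂ σ₁ := by
  rintro ⟨σ₁, σ₂, hv1, hv2, hm1, hm2, hn1, hn2, hbr1, hbr2⟩
  have s1 := FPA.side σ₁ σ₂ hv1 hv2 hm1 hn2 hbr1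
  have s2 := FPA.side σ₂ σ₁ hv2 hv1 hm2 hn1 hbr2
  obtain ⟨h1nn, h1s⟩ := hv1
  obtain ⟨h2nn, h2s⟩ := hv2
  set a := σ₁ 1 0 with ha
  set b := σ₁ 1 1 with hb
  set c := σ₂ 1 0 with hc
  set d := σ₂ 1 1 with hd
  have hab : a + b = 1 := by have := h1s 1; rwa [FPA.two_point _ s1] at this
  have hcd : c + d = 1 := by have := h2s 1; rwa [FPA.two_point _ s2] at this
  have hann : 0 ≤ a := h1nn 1 0
  have hbnn : 0 ≤ b := h1nn 1 1
  have hcnn : 0 ≤ c := h2nn 1 0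
  have hdnn : 0 ≤ d := h2nn 1 1
  -- interim utilities at the middle value, as functions of the weights
  have heval1 : ∀ k : Fin 11, FPA.interim σ₂ 1 k
      = c * FPA.expost (FPA.bid k) (FPA.bid 0) (FPA.val 1)
        + d * FPA.expost (FPA.bid k) (FPA.bid 1) (FPA.val 1) := by
    intro k
    unfold FPA.interim
    have ho : FPA.other 1 = 1 := rfl
    rw [ho, FPA.two_point _ (fun j hj0 hj1 => by rw [s2 j hj0 hj1, zero_mul])]
  have heval2 : ∀ k : Fin 11, FPA.interim σ₁ 1 k
      = a * FPA.expost (FPA.bid k) (FPA.bid 0) (FPA.val 1)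
        + b * FPA.expost (FPA.bid k) (FPA.bid 1) (FPA.val 1) := by
    intro k
    unfold FPA.interim
    have ho : FPA.other 1 = 1 := rfl
    rw [ho, FPA.two_point _ (fun j hj0 hj1 => by rw [s1 j hj0 hj1, zero_mul])]
  -- concrete ex-post numbers
  have e00 : FPA.expost (FPA.bid 0) (FPA.bid 0) (FPA.val 1) = 1/4 := by
    norm_num [FPA.expost, FPA.bid, FPA.val]
  have e01 : FPA.expost (FPA.bid 0) (FPA.bid 1) (FPA.val 1) = 0 := by
    norm_num [FPA.expost, FPA.bid, FPA.val]
  have e10 : FPA.expost (FPA.bid 1) (FPA.bid 0) (FPA.val 1) = 2/5 := by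
    norm_num [FPA.expost, FPA.bid, FPA.val]
  have e11 : FPA.expost (FPA.bid 1) (FPA.bid 1) (FPA.val 1) = 1/5 := by
    norm_num [FPA.expost, FPA.bid, FPA.val]
  have e20 : FPA.expost (FPA.bid 2) (FPA.bid 0) (FPA.val 1) = 3/10 := by
    norm_num [FPA.expost, FPA.bid, FPA.val]
  have e21 : FPA.expost (FPA.bid 2) (FPA.bid 1) (FPA.val 1) = 3/10 := by
    norm_num [FPA.expost, FPA.bid, FPA.val]
  -- best-response inequalities at the middle value
  have mix1 : ∀ k : Fin 11, FPA.interim σ₂ 1 k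
      ≤ a * FPA.interim σ₂ 1 0 + b * FPA.interim σ₂ 1 1 := by
    intro k
    have := hbr1 1 k
    rwa [FPA.two_point _ (fun j hj0 hj1 => by rw [s1 j hj0 hj1, zero_mul])] at this
  have mix2 : ∀ k : Fin 11, FPA.interim σ₁ 1 k
      ≤ c * FPA.interim σ₁ 1 0 + d * FPA.interim σ₁ 1 1 := by
    intro k
    have := hbr2 1 k
    rwa [FPA.two_point _ (fun j hj0 hj1 => by rw [s2 j hj0 hj1, zero_mul])] at this
  have B1 := mix1 1
  have B2 := mix2 1
  have B3 := mix1 2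
  rw [heval1 0, heval1 1, e00, e01, e10, e11] at B1
  rw [heval1 0, heval1 1, heval1 2, e00, e01, e10, e11, e20, e21] at B3
  rw [heval2 0, heval2 1, e00, e01, e10, e11] at B2
  -- B1 : c*(2/5)+d*(1/5) ≤ a*(c/4) + b*(c*(2/5)+d*(1/5))  forces a = 0
  -- B2 : symmetric, forces c = 0; B3 then gives 3/10 ≤ 1/5, absurd.
  have ha0 : a = 0 := by nlinarith
  have hc0 : c = 0 := by nlinarith
  rw [ha0, hc0] at *
  nlinarith
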